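/- There exists a unique natural number n ≥ 1, a unique chain of submodules 0 = M₀ ⊊ M₁ ⊊ ⋯ ⊊ Mₙ = M, and a unique sequence of prime ideals of R satisfying p₁ ≻ p₂ ≻ ⋯ ≻ pₙ (strictly decreasing for the fixed linear order ≼) such that for every i ∈ {1,…,n} the quotient module M_i/M_{i-1} is p_i-coprimary. -/

import Mathlib

set_option linter.unusedSectionVars false
set_option maxHeartbeats 1000000

open Submodule


/-- A coprimary filtration of `M` relative to a linear order `le` on prime ideals:
a chain of submodules `0 = N 0 ⊊ N 1 ⊊ ⋯ ⊊ N n = M` together with prime ideals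
`p 1 ≻ p 2 ≻ ⋯ ≻ p n` (strictly decreasing for `le`) such that each subquotient
`N (i+1) / N i` is `p (i+1)`-coprimary (i.e. its set of associated primes is
`{p (i+1)}`). -/
def IsCoprimaryFiltration {R M : Type*} [CommRing R] [AddCommGroup M] [Module R M]
    (le : Ideal R → Ideal R → Prop)
    (n : ℕ) (N : ℕ → Submodule R M) (p : ℕ → Ideal R) : Prop :=
  1 ≤ n ∧ N 0 = ⊥ ∧ N n = ⊤ ∧
  (∀ i < n, N i < N (i + 1)) ∧
  (∀ i, 1 ≤ i → i ≤ n → (p i).IsPrime) ∧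
  (∀ i : ℕ, i + 1 < n → le (p (i + 2)) (p (i + 1)) ∧ p (i + 2) ≠ p (i + 1)) ∧
  (∀ i < n, associatedPrimes R
      (↥(N (i + 1)) ⧸ ((N i).comap (N (i + 1)).subtype)) = {p (i + 1)})

namespace CP
variable {R : Type*} [CommRing R] {M : Type*} [AddCommGroup M] [Module R M]

lemma ann_smul {x : M} {p : Ideal R} (hp : p.IsPrime) (hx : p = (R ∙ x).annihilator)
    {a : R} (ha : a ∉ p) : p = (R ∙ (a • x)).annihilator := by
  ext r
  rw [mem_annihilator_span_singleton]
  constructor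
  · intro hr
    rw [smul_comm]
    have : r • x = 0 := by rw [hx, mem_annihilator_span_singleton] at hr; exact hr
    rw [this, smul_zero]
  · intro hr
    have : (r * a) • x = 0 := by rw [mul_smul]; exact hr
    have : r * a ∈ p := by rw [hx, mem_annihilator_span_singleton]; exact this
    exact (hp.mem_or_mem this).resolve_right ha

lemma ass_iff [IsNoetherianRing R] {N : Type*} [AddCommGroup N] [Module R N] {p : Ideal R} :
    p ∈ associatedPrimes R N ↔ p.IsPrime ∧ ∃ x : N, p = (R ∙ x).annihilator := by
  rw [AssociatedPrimes.mem_iff, isAssociatedPrime_iff]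
  simp only [Submodule.bot_colon']

/-- Associated primes of `M` are among those of a submodule and the quotient. -/
lemma ass_subset_union [IsNoetherianRing R] (N : Submodule R M) :
    associatedPrimes R M ⊆ associatedPrimes R N ∪ associatedPrimes R (M ⧸ N) := by
  rintro p hp0
  obtain ⟨hp, x, hx⟩ := ass_iff.mp hp0
  by_cases h : ∃ a : R, a • x ∈ N ∧ a • x ≠ 0
  · obtain ⟨a, haN, ha0⟩ := h
    have ha : a ∉ p := by
      intro hap
      rw [hx, mem_annihilator_span_singleton] at hap
      exact ha0 hap
    left
    refine ass_iff.mpr ⟨hp, ⟨a • x, haN⟩, ?_⟩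
    have := ann_smul hp hx ha
    ext r
    rw [mem_annihilator_span_singleton]
    rw [this, mem_annihilator_span_singleton]
    constructor
    · intro hr; ext; simpa using hr
    · intro hr; simpa [Subtype.ext_iff] using hr
  · push_neg at h
    right
    refine ass_iff.mpr ⟨hp, N.mkQ x, ?_⟩
    ext r
    rw [mem_annihilator_span_singleton, ← map_smul, Submodule.mkQ_apply,
      Submodule.Quotient.mk_eq_zero]
    constructor
    · intro hr
      have : r • x = 0 := by rw [hx, mem_annihilator_span_singleton] at hr; exact hr
      rw [this]; exact N.zero_mem
    · intro hr
      have := h r hr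
      rw [hx, mem_annihilator_span_singleton]; exact this

/-- associated primes of a subquotient expressed via an image. -/
lemma ass_subquot_eq {M₂ : Type*} [AddCommGroup M₂] [Module R M₂]
    (A B : Submodule R M) (f : M →ₗ[R] M₂)
    (h : ∀ x ∈ B, f x = 0 ↔ x ∈ A) :
    associatedPrimes R (↥B ⧸ A.comap B.subtype) = associatedPrimes R ↥(B.map f) := by
  have hker : LinearMap.ker (f ∘ₗ B.subtype) = A.comap B.subtype := by
    ext x
    simp [LinearMap.mem_ker, h x x.2]
  have hrange : LinearMap.range (f ∘ₗ B.subtype) = B.map f := by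
    rw [LinearMap.range_comp, Submodule.range_subtype]
  calc associatedPrimes R (↥B ⧸ A.comap B.subtype)
      = associatedPrimes R (↥B ⧸ LinearMap.ker (f ∘ₗ B.subtype)) :=
        (LinearEquiv.AssociatedPrimes.eq (Submodule.quotEquivOfEq _ _ hker.symm))
    _ = associatedPrimes R ↥(LinearMap.range (f ∘ₗ B.subtype)) :=
        (LinearEquiv.AssociatedPrimes.eq (LinearMap.quotKerEquivRange _))
    _ = associatedPrimes R ↥(B.map f) := by rw [hrange]

/-- The `p`-power torsion submodule. -/
def tor (p : Ideal R) (M : Type*) [AddCommGroup M] [Module R M] : Submodule R M :=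
  ⨆ k : ℕ, Submodule.torsionBySet R M ((p ^ k : Ideal R) : Set R)

lemma mem_tor {p : Ideal R} {x : M} :
    x ∈ tor p M ↔ ∃ k : ℕ, ∀ a ∈ (p ^ k : Ideal R), a • x = 0 := by
  have hdir : Directed (· ≤ ·) (fun k : ℕ => Submodule.torsionBySet R M ((p ^ k : Ideal R) : Set R)) := by
    apply Monotone.directed_le
    intro k l hkl
    exact Submodule.torsionBySet_le_torsionBySet_of_subset (Ideal.pow_le_pow_right hkl)
  rw [tor, Submodule.mem_iSup_of_directed _ hdir]
  simp only [Submodule.mem_torsionBySet_iff]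
  constructor
  · rintro ⟨k, hk⟩; exact ⟨k, fun a ha => hk ⟨a, ha⟩⟩
  · rintro ⟨k, hk⟩; exact ⟨k, fun a => hk a a.2⟩

lemma tor_killed [IsNoetherian R M] (p : Ideal R) :
    ∃ k : ℕ, ∀ x ∈ tor p M, ∀ a ∈ (p ^ k : Ideal R), a • x = 0 := by
  obtain ⟨s, hs⟩ := IsNoetherian.noetherian (tor p M)
  have hmem : ∀ g : M, g ∈ s → ∃ k : ℕ, ∀ a ∈ (p ^ k : Ideal R), a • g = 0 := by
    intro g hg
    exact mem_tor.mp (hs ▸ Submodule.subset_span hg)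
  choose! K hK using hmem
  refine ⟨s.sup K, fun x hx a ha => ?_⟩
  have hle : tor p M ≤ Submodule.torsionBySet R M ((p ^ s.sup K : Ideal R) : Set R) := by
    rw [← hs, Submodule.span_le]
    intro g hg
    rw [SetLike.mem_coe, Submodule.mem_torsionBySet_iff]
    rintro ⟨a, ha⟩
    exact hK g hg a (Ideal.pow_le_pow_right (Finset.le_sup hg) ha)
  exact Submodule.mem_torsionBySet_iff _ _ |>.mp (hle hx) ⟨a, ha⟩

variable [IsNoetherianRing R] [IsNoetherian R M]

/-- Associated primes of `M ⧸ Γ_p(M)` are associated primes of `M` not containing `p`. -/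
lemma ass_quot_tor {p r : Ideal R}
    (hr : r ∈ associatedPrimes R (M ⧸ tor p M)) :
    r ∈ associatedPrimes R M ∧ ¬ p ≤ r := by
  obtain ⟨hrp, xq, hxq⟩ := ass_iff.mp hr
  obtain ⟨x, rfl⟩ := Submodule.Quotient.mk_surjective _ xq
  obtain ⟨k, hk⟩ := tor_killed (M := M) p
  have hann : ∀ b : R, b • (Submodule.Quotient.mk x : M ⧸ tor p M) = 0 ↔ b ∈ r := by
    intro b
    rw [hxq, mem_annihilator_span_singleton]
  have hnle : ¬ p ≤ r := by
    intro hpr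
    have hxtor : x ∈ tor p M := by
      rw [mem_tor]
      refine ⟨k + 1, fun a ha => ?_⟩
      rw [pow_succ] at ha
      have hle : (p ^ k * p : Ideal R) ≤ (R ∙ x).annihilator := by
        rw [Ideal.mul_le]
        intro b hb c hc
        rw [mem_annihilator_span_singleton, mul_smul]
        have hcx : c • x ∈ tor p M := by
          rw [← Submodule.Quotient.mk_eq_zero, Submodule.Quotient.mk_smul]
          exact (hann c).mpr (hpr hc)
        exact hk _ hcx b hb
      simpa [mem_annihilator_span_singleton] using hle ha
    have : (Submodule.Quotient.mk x : M ⧸ tor p M) = 0 :=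
      (Submodule.Quotient.mk_eq_zero _).mpr hxtor
    rw [this] at hxq
    apply hrp.ne_top
    rw [hxq, Ideal.eq_top_iff_one, mem_annihilator_span_singleton, one_smul]
  refine ⟨?_, hnle⟩
  have hnpk : ¬ (p ^ (k+1) : Ideal R) ≤ r := fun h => hnle ((hrp.pow_le_iff (Nat.succ_ne_zero k)).mp h)
  obtain ⟨s, hs, hsr⟩ := SetLike.not_le_iff_exists.mp hnpk
  refine ass_iff.mpr ⟨hrp, s • x, ?_⟩
  ext b
  rw [mem_annihilator_span_singleton]
  constructor
  · intro hb
    have hbx : b • x ∈ tor p M := by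
      rw [← Submodule.Quotient.mk_eq_zero, Submodule.Quotient.mk_smul]
      exact (hann b).mpr hb
    rw [smul_comm]
    exact hk _ hbx s (Ideal.pow_le_pow_right (Nat.le_succ k) hs)
  · intro hb
    have hbsx : (b * s) • x = 0 := by rw [mul_smul]; exact hb
    have : (b * s) • (Submodule.Quotient.mk x : M ⧸ tor p M) = 0 := by
      rw [← Submodule.Quotient.mk_smul, hbsx, Submodule.Quotient.mk_zero]
    have hbs : b * s ∈ r := (hann _).mp this
    exact (hrp.mem_or_mem hbs).resolve_right hsr

/-- If `p` is maximal in `Ass(M)` for a linear order extending inclusion,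
then `Ass(Γ_p M) = {p}`. -/
lemma ass_tor_eq (le : Ideal R → Ideal R → Prop)
    (hantisymm : ∀ p q : Ideal R, p.IsPrime → q.IsPrime → le p q → le q p → p = q)
    (hext : ∀ p q : Ideal R, p.IsPrime → q.IsPrime → p ≤ q → le p q)
    {p : Ideal R} (hp : p ∈ associatedPrimes R M)
    (hmax : ∀ q ∈ associatedPrimes R M, le q p) :
    associatedPrimes R ↥(tor p M) = {p} := by
  obtain ⟨hpp, x, hx⟩ := ass_iff.mp hp
  have hxtor : x ∈ tor p M := by
    rw [mem_tor]
    refine ⟨1, fun a ha => ?_⟩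
    rw [pow_one] at ha
    rw [hx, mem_annihilator_span_singleton] at ha
    exact ha
  ext q
  simp only [Set.mem_singleton_iff]
  constructor
  · rintro hq
    obtain ⟨hqp, y, hy⟩ := ass_iff.mp hq
    have hqM : q ∈ associatedPrimes R M :=
      associatedPrimes.subset_of_injective (Submodule.injective_subtype _) (ass_iff.mpr ⟨hqp, y, hy⟩)
    obtain ⟨k, hky⟩ := mem_tor.mp y.2
    have hpkq : (p ^ k : Ideal R) ≤ q := by
      intro a ha
      rw [hy, mem_annihilator_span_singleton]
      ext
      simpa using hky a ha
    by_cases hk0 : k = 0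
    · subst hk0
      rw [pow_zero, Ideal.one_eq_top] at hpkq
      exact absurd (top_le_iff.mp hpkq) hqp.ne_top
    · have hpq : p ≤ q := (Ideal.IsPrime.pow_le_iff hk0).mp hpkq
      exact hantisymm q p hqp hpp (hmax q hqM) (hext p q hpp hqp hpq)
  · rintro rfl
    refine ass_iff.mpr ⟨hpp, ⟨x, hxtor⟩, ?_⟩
    ext r
    rw [mem_annihilator_span_singleton]
    constructor
    · intro h
      have hrx : r • x = 0 := by rw [hx, mem_annihilator_span_singleton] at h; exact h
      ext; simpa using hrx
    · intro h
      have hrx : r • x = 0 := by simpa [Subtype.ext_iff] using h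
      rw [hx, mem_annihilator_span_singleton]; exact hrx

/-- If `Ass M ⊆ {p}` then `M` is `p`-power torsion. -/
lemma tor_eq_top {p : Ideal R}
    (hass : associatedPrimes R M ⊆ {p}) : tor p M = ⊤ := by
  by_contra h
  have hnt : Nontrivial (M ⧸ tor p M) :=
    Submodule.Quotient.nontrivial_iff.mpr h
  obtain ⟨r, hr⟩ := associatedPrimes.nonempty R (M ⧸ tor p M)
  obtain ⟨hrM, hnle⟩ := ass_quot_tor hr
  have := hass hrM
  rw [Set.mem_singleton_iff] at this
  subst this
  exact hnle le_rfl


lemma ass_quot_finite : ∀ W : Submodule R M, (associatedPrimes R (M ⧸ W)).Finite := by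
  intro W
  induction W using IsNoetherian.induction with
  | _ W IH =>
    by_cases hW : W = ⊤
    · subst hW
      have : Subsingleton (M ⧸ (⊤ : Submodule R M)) :=
        Submodule.Quotient.subsingleton_iff.mpr rfl
      rw [associatedPrimes.eq_empty_of_subsingleton]
      exact Set.finite_empty
    · have hnt : Nontrivial (M ⧸ W) :=
        Submodule.Quotient.nontrivial_iff.mpr hW
      obtain ⟨p, hp⟩ := associatedPrimes.nonempty R (M ⧸ W)
      obtain ⟨hpp, xq, hxq⟩ := ass_iff.mp hp
      obtain ⟨x, rfl⟩ := Submodule.Quotient.mk_surjective _ xq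
      have hxW : x ∉ W := by
        intro hx
        apply hpp.ne_top
        rw [hxq, Ideal.eq_top_iff_one, mem_annihilator_span_singleton, one_smul,
          ← Submodule.Quotient.mk_eq_zero W] at *
        exact hx
      set W' : Submodule R M := W ⊔ R ∙ x with hW'def
      have hWW' : W < W' := by
        refine lt_of_le_of_ne le_sup_left (fun h => hxW ?_)
        rw [h]
        exact le_sup_right (α := Submodule R M) (Submodule.mem_span_singleton_self x)
      set K : Submodule R (M ⧸ W) := R ∙ (Submodule.Quotient.mk x : M ⧸ W) with hKdef
      have hKmap : K = W'.map W.mkQ := by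
        rw [hW'def, Submodule.map_sup]
        have h1 : W.map W.mkQ = ⊥ :=
          le_bot_iff.mp (Submodule.map_le_iff_le_comap.mpr
            (by rw [Submodule.comap_bot, Submodule.ker_mkQ]))
        have h2 : (R ∙ x).map W.mkQ = K := by
          rw [hKdef, Submodule.map_span, Set.image_singleton, Submodule.mkQ_apply]
        rw [h1, h2, bot_sup_eq]
      have hsub : associatedPrimes R (M ⧸ W) ⊆
          associatedPrimes R ↥K ∪ associatedPrimes R ((M ⧸ W) ⧸ K) :=
        ass_subset_union K
      have hK1 : associatedPrimes R ↥K ⊆ {p} := by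
        rintro q hq0
        obtain ⟨hqp, y, hy⟩ := ass_iff.mp hq0
        obtain ⟨a, hay⟩ := Submodule.mem_span_singleton.mp y.2
        by_cases hap : a ∈ p
        · exfalso
          have hy0 : (y : M ⧸ W) = 0 := by
            rw [← hay]
            have : a • (Submodule.Quotient.mk x : M ⧸ W) = 0 := by
              rw [hxq, mem_annihilator_span_singleton] at hap; exact hap
            exact this
          apply hqp.ne_top
          rw [hy, Ideal.eq_top_iff_one, mem_annihilator_span_singleton, one_smul]
          rw [Subtype.ext_iff]; simpa using hy0
        · have := ann_smul hpp hxq hap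
          rw [Set.mem_singleton_iff, hy, this]
          ext r
          rw [mem_annihilator_span_singleton, mem_annihilator_span_singleton]
          rw [hay]
          simp [Subtype.ext_iff]
      have hK2 : associatedPrimes R ((M ⧸ W) ⧸ K) = associatedPrimes R (M ⧸ W') := by
        rw [hKmap]
        exact LinearEquiv.AssociatedPrimes.eq
          (Submodule.quotientQuotientEquivQuotient W W' hWW'.le)
      refine Set.Finite.subset (Set.Finite.union (Set.finite_singleton p) (IH W' hWW')) ?_
      intro q hq
      rcases hsub hq with h | h
      · exact Or.inl (hK1 h)
      · exact Or.inr (hK2 ▸ h)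


lemma ass_finite : (associatedPrimes R M).Finite := by
  have := ass_quot_finite (R := R) (M := M) ⊥
  rwa [LinearEquiv.AssociatedPrimes.eq (Submodule.quotEquivOfEqBot ⊥ rfl)] at this


lemma exists_max_aux (le : Ideal R → Ideal R → Prop)
    (hrefl : ∀ p : Ideal R, p.IsPrime → le p p)
    (htrans : ∀ p q s : Ideal R, p.IsPrime → q.IsPrime → s.IsPrime →
      le p q → le q s → le p s)
    (htotal : ∀ p q : Ideal R, p.IsPrime → q.IsPrime → le p q ∨ le q p) :
    ∀ t : Finset (Ideal R), t.Nonempty → (∀ q ∈ t, q.IsPrime) →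
      ∃ p ∈ t, ∀ q ∈ t, le q p := by
  classical
  intro t
  induction t using Finset.induction with
  | empty => rintro ⟨a, ha⟩ _; exact absurd ha (Finset.notMem_empty a)
  | @insert a t ha IH =>
    intro _ hprime
    by_cases hte : t.Nonempty
    · obtain ⟨m, hm, hmax⟩ := IH hte (fun q hq => hprime q (Finset.mem_insert_of_mem hq))
      have hap : a.IsPrime := hprime a (Finset.mem_insert_self a t)
      have hmp : m.IsPrime := hprime m (Finset.mem_insert_of_mem hm)
      rcases htotal a m hap hmp with h | h
      · refine ⟨m, Finset.mem_insert_of_mem hm, fun q hq => ?_⟩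
        rcases Finset.mem_insert.mp hq with rfl | hq
        · exact h
        · exact hmax q hq
      · refine ⟨a, Finset.mem_insert_self a t, fun q hq => ?_⟩
        rcases Finset.mem_insert.mp hq with rfl | hq
        · exact hrefl _ (hprime _ hq)
        · exact htrans q m a (hprime q (Finset.mem_insert_of_mem hq)) hmp hap (hmax q hq) h
    · rw [Finset.not_nonempty_iff_eq_empty] at hte
      subst hte
      have hap : a.IsPrime := hprime a (Finset.mem_insert_self a ∅)
      refine ⟨a, Finset.mem_insert_self a ∅, fun q hq => ?_⟩
      rcases Finset.mem_insert.mp hq with rfl | hq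
      · exact hrefl _ (hprime _ hq)
      · exact absurd hq (Finset.notMem_empty q)

lemma exists_max (le : Ideal R → Ideal R → Prop)
    (hrefl : ∀ p : Ideal R, p.IsPrime → le p p)
    (htrans : ∀ p q s : Ideal R, p.IsPrime → q.IsPrime → s.IsPrime →
      le p q → le q s → le p s)
    (htotal : ∀ p q : Ideal R, p.IsPrime → q.IsPrime → le p q ∨ le q p)
    {s : Set (Ideal R)} (hfin : s.Finite) (hne : s.Nonempty)
    (hsp : ∀ q ∈ s, q.IsPrime) : ∃ p ∈ s, ∀ q ∈ s, le q p := by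
  obtain ⟨p, hp, hmax⟩ := exists_max_aux (R := R) le hrefl htrans htotal hfin.toFinset
    (by rwa [Set.Finite.toFinset_nonempty]) (fun q hq => hsp q (hfin.mem_toFinset.mp hq))
  exact ⟨p, hfin.mem_toFinset.mp hp, fun q hq => hmax q (hfin.mem_toFinset.mpr hq)⟩


section CF
variable {le : Ideal R → Ideal R → Prop} {n : ℕ} {N : ℕ → Submodule R M} {p : ℕ → Ideal R}

lemma CF.mono (hCF : IsCoprimaryFiltration le n N p) :
    ∀ i j, i ≤ j → j ≤ n → N i ≤ N j := by
  obtain ⟨hn, h0, htop, hstrict, -⟩ := hCF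
  intro i j hij
  induction j, hij using Nat.le_induction with
  | base => intro _; exact le_rfl
  | succ j hij IH =>
    intro hjn
    exact (IH (by omega)).trans (hstrict j (by omega)).le

lemma CF.cons' (hCF : IsCoprimaryFiltration le n N p) :
    ∀ i, 1 ≤ i → i + 1 ≤ n → le (p (i + 1)) (p i) ∧ p (i + 1) ≠ p i := by
  intro i h1 h2
  obtain ⟨i', rfl⟩ : ∃ i', i = i' + 1 := ⟨i - 1, by omega⟩
  exact hCF.2.2.2.2.2.1 i' (by omega)

lemma CF.chain (hCF : IsCoprimaryFiltration le n N p)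
    (htrans : ∀ p q s : Ideal R, p.IsPrime → q.IsPrime → s.IsPrime →
      le p q → le q s → le p s)
    (hantisymm : ∀ p q : Ideal R, p.IsPrime → q.IsPrime → le p q → le q p → p = q) :
    ∀ j, 2 ≤ j → j ≤ n → le (p j) (p 1) ∧ p j ≠ p 1 := by
  have hprime := hCF.2.2.2.2.1
  intro j hj
  induction j, hj using Nat.le_induction with
  | base => intro h; exact CF.cons' hCF 1 le_rfl h
  | succ j hj IH =>
    intro hjn
    have hIH := IH (by omega)
    have hc := CF.cons' hCF j (by omega) (by omega)
    have hpj := hprime j (by omega) (by omega)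
    have hpj1 := hprime (j+1) (by omega) (by omega)
    have hp1 := hprime 1 (by omega) (by omega)
    refine ⟨htrans _ _ _ hpj1 hpj hp1 hc.1 hIH.1, fun h => ?_⟩
    exact hc.2 (hantisymm _ _ hpj1 hpj (hc.1) (h ▸ hIH.1))

lemma CF.ass_sub (hCF : IsCoprimaryFiltration le n N p) :
    ∀ j ≤ n, ∀ q ∈ associatedPrimes R ↥(N j), ∃ i, 1 ≤ i ∧ i ≤ j ∧ q = p i := by
  intro j
  induction j with
  | zero =>
    intro _ q hq
    rw [hCF.2.1] at hq
    rw [associatedPrimes.eq_empty_of_subsingleton] at hq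
    exact absurd hq (Set.notMem_empty q)
  | succ j IH =>
    intro hjn q hq
    have hle : N j ≤ N (j + 1) := (hCF.2.2.2.1 j (by omega)).le
    rcases ass_subset_union ((N j).comap (N (j+1)).subtype) hq with h | h
    · rw [LinearEquiv.AssociatedPrimes.eq (Submodule.comapSubtypeEquivOfLe hle)] at h
      obtain ⟨i, h1, h2, h3⟩ := IH (by omega) q h
      exact ⟨i, h1, by omega, h3⟩
    · rw [hCF.2.2.2.2.2.2 j (by omega)] at h
      exact ⟨j + 1, by omega, le_rfl, h⟩

lemma CF.ass_mem (hCF : IsCoprimaryFiltration le n N p) :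
    ∀ q ∈ associatedPrimes R M, ∃ i, 1 ≤ i ∧ i ≤ n ∧ q = p i := by
  intro q hq
  have h : q ∈ associatedPrimes R ↥(N n) := by
    have : associatedPrimes R ↥(N n) = associatedPrimes R M := by
      rw [hCF.2.2.1]
      exact LinearEquiv.AssociatedPrimes.eq Submodule.topEquiv
    rw [this]
    exact hq
  exact CF.ass_sub hCF n le_rfl q h


lemma map_mkQ_self_eq_bot (W : Submodule R M) : W.map W.mkQ = ⊥ :=
  le_bot_iff.mp (Submodule.map_le_iff_le_comap.mpr
    (by rw [Submodule.comap_bot, Submodule.ker_mkQ]))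

lemma CF.shift (hCF : IsCoprimaryFiltration le n N p) (hn : 2 ≤ n) :
    IsCoprimaryFiltration le (n-1) (fun i => (N (i+1)).map (N 1).mkQ)
      (fun i => p (i+1)) := by
  obtain ⟨hn1, h0, htop, hstrict, hprime, hcons, hass⟩ := hCF
  have hmono := CF.mono ⟨hn1, h0, htop, hstrict, hprime, hcons, hass⟩
  refine ⟨by omega, map_mkQ_self_eq_bot _, ?_, ?_, ?_, ?_, ?_⟩
  · show Submodule.map (N 1).mkQ (N (n - 1 + 1)) = ⊤
    have : n - 1 + 1 = n := by omega
    rw [this, htop, Submodule.map_top, Submodule.range_mkQ]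
  · intro i hi
    show Submodule.map (N 1).mkQ (N (i + 1)) < Submodule.map (N 1).mkQ (N (i + 1 + 1))
    have h1 : N 1 ≤ N (i + 1) := hmono 1 (i+1) (by omega) (by omega)
    have h2 : N (i + 1) < N (i + 2) := hstrict (i+1) (by omega)
    refine lt_of_le_of_ne (Submodule.map_mono h2.le) (fun h => ?_)
    have e1 : Submodule.comap (N 1).mkQ ((N (i+1)).map (N 1).mkQ) = N (i+1) := by
      rw [Submodule.comap_map_mkQ, sup_eq_right.mpr h1]
    have e2 : Submodule.comap (N 1).mkQ ((N (i+2)).map (N 1).mkQ) = N (i+2) := by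
      rw [Submodule.comap_map_mkQ, sup_eq_right.mpr (h1.trans h2.le)]
    have heq : N (i+1) = N (i+2) := by rw [← e1, ← e2, h]
    exact h2.ne heq
  · intro i h1 h2
    exact hprime (i+1) (by omega) (by omega)
  · intro i hi
    exact hcons (i+1) (by omega)
  · intro i hi
    show associatedPrimes R (↥(Submodule.map (N 1).mkQ (N (i+1+1))) ⧸
      (Submodule.comap (Submodule.map (N 1).mkQ (N (i+1+1))).subtype
        (Submodule.map (N 1).mkQ (N (i+1))))) = {p (i+1+1)}
    have h1 : N 1 ≤ N (i+1) := hmono 1 (i+1) (by omega) (by omega)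
    have e1 := ass_subquot_eq ((N (i+1)).map (N 1).mkQ) ((N (i+2)).map (N 1).mkQ)
      ((N (i+1)).map (N 1).mkQ).mkQ
      (fun x _ => by rw [Submodule.mkQ_apply, Submodule.Quotient.mk_eq_zero])
    have e2 := ass_subquot_eq (N (i+1)) (N (i+2))
      (((N (i+1)).map (N 1).mkQ).mkQ ∘ₗ (N 1).mkQ)
      (fun x _ => by
        rw [LinearMap.comp_apply, Submodule.mkQ_apply, Submodule.mkQ_apply,
          Submodule.Quotient.mk_eq_zero]
        constructor
        · intro h
          have : x ∈ Submodule.comap (N 1).mkQ ((N (i+1)).map (N 1).mkQ) := h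
          rwa [Submodule.comap_map_mkQ, sup_eq_right.mpr h1] at this
        · intro h
          exact Submodule.mem_map_of_mem h)
    rw [Submodule.map_comp] at e2
    have hgoal : (i + 1 + 1 : ℕ) = i + 2 := by omega
    rw [hgoal, e1, ← e2]
    exact hass (i+1) (by omega)


lemma CF.first_step
    (hrefl : ∀ p : Ideal R, p.IsPrime → le p p)
    (htrans : ∀ p q s : Ideal R, p.IsPrime → q.IsPrime → s.IsPrime →
      le p q → le q s → le p s)
    (hantisymm : ∀ p q : Ideal R, p.IsPrime → q.IsPrime → le p q → le q p → p = q)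
    (hext : ∀ p q : Ideal R, p.IsPrime → q.IsPrime → p ≤ q → le p q)
    (hCF : IsCoprimaryFiltration le n N p) :
    p 1 ∈ associatedPrimes R M ∧ (∀ q ∈ associatedPrimes R M, le q (p 1)) ∧
      N 1 = tor (p 1) M := by
  obtain ⟨hn1, h0, htop, hstrict, hprime, hcons, hass⟩ := hCF
  have hCF' : IsCoprimaryFiltration le n N p := ⟨hn1, h0, htop, hstrict, hprime, hcons, hass⟩
  have hp1 : (p 1).IsPrime := hprime 1 le_rfl hn1
  have hassN1 : associatedPrimes R ↥(N 1) = {p 1} := by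
    have h := hass 0 (by omega)
    have hcomap : (N 0).comap (N 1).subtype = ⊥ := by
      rw [h0, Submodule.comap_bot, Submodule.ker_subtype]
    rw [hcomap] at h
    rwa [LinearEquiv.AssociatedPrimes.eq (Submodule.quotEquivOfEqBot _ rfl)] at h
  have hp1M : p 1 ∈ associatedPrimes R M := by
    have : p 1 ∈ associatedPrimes R ↥(N 1) := by rw [hassN1]; exact rfl
    exact associatedPrimes.subset_of_injective (Submodule.injective_subtype _) this
  have hmax : ∀ q ∈ associatedPrimes R M, le q (p 1) := by
    intro q hq
    obtain ⟨i, hi1, hin, rfl⟩ := CF.ass_mem hCF' q hq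
    by_cases hi : i = 1
    · subst hi; exact hrefl _ hp1
    · exact (CF.chain hCF' htrans hantisymm i (by omega) hin).1
  refine ⟨hp1M, hmax, le_antisymm ?_ ?_⟩
  · -- N 1 ≤ tor
    have htor : tor (p 1) ↥(N 1) = ⊤ := tor_eq_top (by rw [hassN1])
    intro x hx
    have : (⟨x, hx⟩ : ↥(N 1)) ∈ tor (p 1) ↥(N 1) := by rw [htor]; trivial
    obtain ⟨k, hk⟩ := mem_tor.mp this
    rw [mem_tor]
    refine ⟨k, fun a ha => ?_⟩
    have := hk a ha
    simpa [Subtype.ext_iff] using this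
  · -- tor ≤ N 1
    intro x hx
    by_contra hxN
    obtain ⟨k, hk⟩ := mem_tor.mp hx
    by_cases hk0 : k = 0
    · subst hk0
      apply hxN
      have : x = 0 := by simpa using hk 1 (by simp)
      rw [this]; exact (N 1).zero_mem
    by_cases hn2 : 2 ≤ n
    · have hshift := CF.shift hCF' hn2
      have hx0 : (N 1).mkQ x ≠ 0 := by
        rw [Submodule.mkQ_apply, Ne, Submodule.Quotient.mk_eq_zero]
        exact hxN
      obtain ⟨q, hqass, hannq⟩ :=
        exists_le_isAssociatedPrime_of_isNoetherianRing R ((N 1).mkQ x) hx0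
      have hqp : q.IsPrime := hqass.isPrime
      have hpkq : (p 1) ^ k ≤ q := by
        refine le_trans (fun a ha => ?_) hannq
        rw [Submodule.mem_colon_singleton, Submodule.mem_bot, Submodule.mkQ_apply, ← Submodule.Quotient.mk_smul,
          hk a ha, Submodule.Quotient.mk_zero]
      have hpq : p 1 ≤ q := (Ideal.IsPrime.pow_le_iff hk0).mp hpkq
      obtain ⟨i, hi1, hin, hqe⟩ := CF.ass_mem hshift q hqass
      have hchain : le q (p 1) ∧ q ≠ p 1 := by
        rw [hqe]
        exact CF.chain hCF' htrans hantisymm (i+1) (by omega) (by omega)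
      exact hchain.2 (hantisymm q (p 1) hqp hp1 hchain.1 (hext _ _ hp1 hqp hpq))
    · -- n = 1, so N 1 = ⊤
      apply hxN
      have : n = 1 := by omega
      rw [← this, htop]
      trivial

end CF
end CP

universe u v

namespace CP

lemma uniq {R : Type u} [CommRing R] [IsNoetherianRing R]
    (le : Ideal R → Ideal R → Prop)
    (hrefl : ∀ p : Ideal R, p.IsPrime → le p p)
    (htrans : ∀ p q s : Ideal R, p.IsPrime → q.IsPrime → s.IsPrime →
      le p q → le q s → le p s)
    (hantisymm : ∀ p q : Ideal R, p.IsPrime → q.IsPrime → le p q → le q p → p = q)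
    (hext : ∀ p q : Ideal R, p.IsPrime → q.IsPrime → p ≤ q → le p q) :
    ∀ n : ℕ, ∀ {M : Type v} [AddCommGroup M] [Module R M] [IsNoetherian R M],
    ∀ (m : ℕ) (N N' : ℕ → Submodule R M) (p p' : ℕ → Ideal R),
      IsCoprimaryFiltration le n N p → IsCoprimaryFiltration le m N' p' →
      n = m ∧ (∀ i ≤ n, N i = N' i) ∧ (∀ i, 1 ≤ i → i ≤ n → p i = p' i) := by
  intro n
  induction n using Nat.strong_induction_on with
  | _ n IH =>
  intro M _ _ _ m N N' p p' hCF hCF'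
  have h1 := CP.CF.first_step hrefl htrans hantisymm hext hCF
  have h1' := CP.CF.first_step hrefl htrans hantisymm hext hCF'
  have hp1p : (p 1).IsPrime := hCF.2.2.2.2.1 1 le_rfl hCF.1
  have hp1p' : (p' 1).IsPrime := hCF'.2.2.2.2.1 1 le_rfl hCF'.1
  have hp1 : p 1 = p' 1 :=
    hantisymm _ _ hp1p hp1p' (h1'.2.1 (p 1) h1.1) (h1.2.1 (p' 1) h1'.1)
  have hN1 : N 1 = N' 1 := by rw [h1.2.2, h1'.2.2, hp1]
  by_cases hn2 : 2 ≤ n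
  · have hm2 : 2 ≤ m := by
      by_contra h'
      have hm1 : m = 1 := by have := hCF'.1; omega
      have htop' : N' 1 = ⊤ := by rw [← hm1]; exact hCF'.2.2.1
      have hlt : N 1 < N 2 := hCF.2.2.2.1 1 (by omega)
      rw [hN1, htop'] at hlt
      exact absurd hlt not_top_lt
    have hs := CP.CF.shift hCF hn2
    have hs' := CP.CF.shift hCF' hm2
    rw [← hN1] at hs'
    obtain ⟨hnm, hNs, hps⟩ := IH (n-1) (by omega) (m-1) _ _ _ _ hs hs'
    have hmono := CP.CF.mono hCF
    have hmono' := CP.CF.mono hCF'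
    refine ⟨by omega, ?_, ?_⟩
    · intro i hin
      match i, hin with
      | 0, _ => rw [hCF.2.1, hCF'.2.1]
      | 1, _ => exact hN1
      | (j+2), hin =>
        have hmap := hNs (j+1) (by omega)
        have hNi : N 1 ≤ N (j+2) := hmono 1 (j+2) (by omega) hin
        have hNi' : N' 1 ≤ N' (j+2) := hmono' 1 (j+2) (by omega) (by omega)
        have e1 : Submodule.comap (N 1).mkQ (Submodule.map (N 1).mkQ (N (j+2))) = N (j+2) := by
          rw [Submodule.comap_map_mkQ, sup_eq_right.mpr hNi]
        have e2 : Submodule.comap (N 1).mkQ (Submodule.map (N 1).mkQ (N' (j+2))) = N' (j+2) := by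
          rw [Submodule.comap_map_mkQ, hN1, sup_eq_right.mpr hNi']
        rw [← e1, ← e2, hmap]
    · intro i h1i hin
      match i, h1i, hin with
      | 1, _, _ => exact hp1
      | (j+2), _, hin =>
        have := hps (j+1) (by omega) (by omega)
        simpa using this
  · have hn1 : n = 1 := by have := hCF.1; omega
    have hm1 : m = 1 := by
      by_contra h'
      have hm2 : 2 ≤ m := by have := hCF'.1; omega
      have htopn : N 1 = ⊤ := by rw [← hn1]; exact hCF.2.2.1
      have hlt : N' 1 < N' 2 := hCF'.2.2.2.1 1 (by omega)
      rw [← hN1, htopn] at hlt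
      exact absurd hlt not_top_lt
    refine ⟨by omega, ?_, ?_⟩
    · intro i hin
      match i, hin with
      | 0, _ => rw [hCF.2.1, hCF'.2.1]
      | 1, _ => exact hN1
      | (j+2), hin => exact absurd hin (by omega)
    · intro i h1i hin
      match i, h1i, hin with
      | 1, _, _ => exact hp1
      | (j+2), _, hin => exact absurd hin (by omega)

end CP

namespace CP
variable {R : Type u} [CommRing R] {M : Type v} [AddCommGroup M] [Module R M]
variable [IsNoetherianRing R] [IsNoetherian R M]

lemma key_step (le : Ideal R → Ideal R → Prop)
    (hrefl : ∀ p : Ideal R, p.IsPrime → le p p)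
    (htrans : ∀ p q s : Ideal R, p.IsPrime → q.IsPrime → s.IsPrime →
      le p q → le q s → le p s)
    (hantisymm : ∀ p q : Ideal R, p.IsPrime → q.IsPrime → le p q → le q p → p = q)
    (htotal : ∀ p q : Ideal R, p.IsPrime → q.IsPrime → le p q ∨ le q p)
    (hext : ∀ p q : Ideal R, p.IsPrime → q.IsPrime → p ≤ q → le p q)
    (W : Submodule R M) (hW : W ≠ ⊤) :
    ∃ (W' : Submodule R M) (q : Ideal R), W < W' ∧ q.IsPrime ∧
      associatedPrimes R (↥W' ⧸ W.comap W'.subtype) = {q} ∧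
      (∀ r ∈ associatedPrimes R (M ⧸ W'), le r q ∧ r ≠ q) ∧
      q ∈ associatedPrimes R (M ⧸ W) := by
  have hnt : Nontrivial (M ⧸ W) :=
    Submodule.Quotient.nontrivial_iff.mpr hW
  obtain ⟨q, hqmem, hqmax⟩ := exists_max le hrefl htrans htotal
    (ass_quot_finite W) (associatedPrimes.nonempty R (M ⧸ W))
    (fun r hr => hr.isPrime)
  have hqp : q.IsPrime := hqmem.isPrime
  set G : Submodule R (M ⧸ W) := tor q (M ⧸ W) with hGdef
  set W' : Submodule R M := G.comap W.mkQ with hW'def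
  have hmapW' : W'.map W.mkQ = G := by
    rw [hW'def, Submodule.map_comap_eq, Submodule.range_mkQ, top_inf_eq]
  have hWle : W ≤ W' := by
    intro x hx
    rw [hW'def, Submodule.mem_comap, Submodule.mkQ_apply,
      (Submodule.Quotient.mk_eq_zero W).mpr hx]
    exact G.zero_mem
  have hGne : G ≠ ⊥ := by
    obtain ⟨hq', x, hx⟩ := ass_iff.mp hqmem
    intro hGbot
    have hxG : x ∈ G := by
      rw [hGdef, mem_tor]
      refine ⟨1, fun a ha => ?_⟩
      rw [pow_one] at ha
      rw [hx, mem_annihilator_span_singleton] at ha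
      exact ha
    rw [hGbot, Submodule.mem_bot] at hxG
    apply hq'.ne_top
    rw [hx, hxG, Ideal.eq_top_iff_one, mem_annihilator_span_singleton, one_smul]
  have hlt : W < W' := by
    refine lt_of_le_of_ne hWle (fun h => hGne ?_)
    rw [← hmapW', ← h, map_mkQ_self_eq_bot]
  have hsubq : associatedPrimes R (↥W' ⧸ W.comap W'.subtype) = {q} := by
    have e := ass_subquot_eq W W' W.mkQ
      (fun x _ => by rw [Submodule.mkQ_apply, Submodule.Quotient.mk_eq_zero])
    rw [e, hmapW']
    exact ass_tor_eq le hantisymm hext hqmem hqmax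
  have hquot : associatedPrimes R (M ⧸ W') = associatedPrimes R ((M ⧸ W) ⧸ G) := by
    rw [← hmapW']
    exact (LinearEquiv.AssociatedPrimes.eq
      (Submodule.quotientQuotientEquivQuotient W W' hWle)).symm
  refine ⟨W', q, hlt, hqp, hsubq, ?_, hqmem⟩
  intro r hr
  rw [hquot] at hr
  obtain ⟨hrW, hnle⟩ := ass_quot_tor hr
  refine ⟨hqmax r hrW, fun h => hnle (h ▸ le_rfl)⟩

lemma exist [Nontrivial M] (le : Ideal R → Ideal R → Prop)
    (hrefl : ∀ p : Ideal R, p.IsPrime → le p p)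
    (htrans : ∀ p q s : Ideal R, p.IsPrime → q.IsPrime → s.IsPrime →
      le p q → le q s → le p s)
    (hantisymm : ∀ p q : Ideal R, p.IsPrime → q.IsPrime → le p q → le q p → p = q)
    (htotal : ∀ p q : Ideal R, p.IsPrime → q.IsPrime → le p q ∨ le q p)
    (hext : ∀ p q : Ideal R, p.IsPrime → q.IsPrime → p ≤ q → le p q) :
    ∃ n : ℕ, ∃ N : ℕ → Submodule R M, ∃ p : ℕ → Ideal R,
      IsCoprimaryFiltration le n N p := by
  classical
  have key : ∀ W : Submodule R M, ∃ (W' : Submodule R M) (q : Ideal R),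
      (W ≠ ⊤ → (W < W' ∧ q.IsPrime ∧
        associatedPrimes R (↥W' ⧸ W.comap W'.subtype) = {q} ∧
        (∀ r ∈ associatedPrimes R (M ⧸ W'), le r q ∧ r ≠ q) ∧
        q ∈ associatedPrimes R (M ⧸ W))) ∧ (W = ⊤ → W' = ⊤) := by
    intro W
    by_cases h : W = ⊤
    · exact ⟨⊤, ⊥, fun h' => absurd h h', fun _ => rfl⟩
    · obtain ⟨W', q', hq'⟩ := key_step le hrefl htrans hantisymm htotal hext W h
      exact ⟨W', q', fun _ => hq', fun h' => absurd h' h⟩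
  choose F Q hkey htop' using key
  set f : ℕ → Submodule R M := fun k => Nat.rec ⊥ (fun _ acc => F acc) k with hfdef
  have hf0 : f 0 = ⊥ := rfl
  have hfsucc : ∀ k, f (k+1) = F (f k) := fun k => rfl
  have hmono : Monotone f := by
    apply monotone_nat_of_le_succ
    intro k
    by_cases h : f k = ⊤
    · rw [hfsucc, htop' _ h, h]
    · exact (hkey (f k) h).1.le
  have hstab : ∃ k, f k = ⊤ := by
    by_contra h
    push_neg at h
    obtain ⟨k0, hk0⟩ := monotone_stabilizes_iff_noetherian.mpr
      (inferInstance : IsNoetherian R M) ⟨f, hmono⟩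
    have := (hkey (f k0) (h k0)).1
    rw [← hfsucc] at this
    exact this.ne (hk0 (k0+1) (Nat.le_succ k0))
  set n := Nat.find hstab with hndef
  have hntop : f n = ⊤ := Nat.find_spec hstab
  have hlt : ∀ k, k < n → f k ≠ ⊤ := fun k hk => Nat.find_min hstab hk
  have hn1 : 1 ≤ n := by
    rcases Nat.eq_zero_or_pos n with h | h
    · exfalso
      have := hntop
      rw [h, hf0] at this
      exact bot_ne_top this
    · exact h
  refine ⟨n, f, fun i => Q (f (i-1)), hn1, hf0, hntop, ?_, ?_, ?_, ?_⟩
  · intro i hi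
    rw [hfsucc]
    exact (hkey (f i) (hlt i hi)).1
  · intro i h1 h2
    have : i - 1 < n := by omega
    exact (hkey (f (i-1)) (hlt _ this)).2.1
  · intro i hi
    have h1 := (hkey (f i) (hlt i (by omega))).2.2.2.1
    have h2 := (hkey (f (i+1)) (hlt (i+1) hi)).2.2.2.2
    rw [← hfsucc] at h1
    exact h1 _ h2
  · intro i hi
    have h := (hkey (f i) (hlt i hi)).2.2.1
    show associatedPrimes R (↥(F (f i)) ⧸ Submodule.comap (F (f i)).subtype (f i)) = {Q (f i)}
    exact h

end CP

theorem stmt8 {R M : Type*} [CommRing R] [IsNoetherianRing R]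
    [AddCommGroup M] [Module R M] [Module.Finite R M] [Nontrivial M]
    -- a linear order on the prime ideals of `R` extending inclusion
    (le : Ideal R → Ideal R → Prop)
    (hrefl : ∀ p : Ideal R, p.IsPrime → le p p)
    (htrans : ∀ p q s : Ideal R, p.IsPrime → q.IsPrime → s.IsPrime →
      le p q → le q s → le p s)
    (hantisymm : ∀ p q : Ideal R, p.IsPrime → q.IsPrime → le p q → le q p → p = q)
    (htotal : ∀ p q : Ideal R, p.IsPrime → q.IsPrime → le p q ∨ le q p)
    (hext : ∀ p q : Ideal R, p.IsPrime → q.IsPrime → p ≤ q → le p q) :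
    (∃ n : ℕ, ∃ N : ℕ → Submodule R M, ∃ p : ℕ → Ideal R,
      IsCoprimaryFiltration le n N p) ∧
    (∀ n m : ℕ, ∀ N N' : ℕ → Submodule R M, ∀ p p' : ℕ → Ideal R,
      IsCoprimaryFiltration le n N p → IsCoprimaryFiltration le m N' p' →
      n = m ∧ (∀ i ≤ n, N i = N' i) ∧ (∀ i, 1 ≤ i → i ≤ n → p i = p' i)) := by
  have _inst : IsNoetherian R M := isNoetherian_of_isNoetherianRing_of_finite R M
  constructor
  · exact CP.exist le hrefl htrans hantisymm htotal hext
  · intro n m N N' p p' h h'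
    exact CP.uniq le hrefl htrans hantisymm hext n m N N' p p' h h'
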